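/- arXiv:0902.4337 — 2 statements merged into one kernel-verified Lean document; each statement's English description precedes it below -/
import Mathlib

section
/- Let r = (α, p) and s = (β, q) be rigid motions of the plane, where (γ, v) acts by x ↦ M_γ x + v with M_γ the rotation by angle 2πγ. Suppose |α - β| ≤ δ and ‖p - q‖ ≤ √2·δ for some δ with 0 ≤ 2πδ ≤ π/2. Then for every x with ‖x‖ ≤ D, we have ‖r(x) - s(x)‖ ≤ (√2 + 2πD)·δ. -/
open Real

/-- Rotation of the Euclidean plane by angle `2πα`. -/
noncomputable def rotE (α : ℝ) (x : EuclideanSpace ℝ (Fin 2)) :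
    EuclideanSpace ℝ (Fin 2) :=
  (WithLp.equiv 2 (Fin 2 → ℝ)).symm
    ![Real.cos (2 * π * α) * x 0 - Real.sin (2 * π * α) * x 1,
      Real.sin (2 * π * α) * x 0 + Real.cos (2 * π * α) * x 1]

lemma rot_diff_le (α β : ℝ) (x : EuclideanSpace ℝ (Fin 2)) :
    ‖rotE α x - rotE β x‖ ≤ 2 * π * |α - β| * ‖x‖ := by
  set a := 2 * π * α with ha'
  set b := 2 * π * β with hb'
  have hkey : ‖rotE α x - rotE β x‖ ^ 2 =
      (2 - 2 * Real.cos (a - b)) * ‖x‖ ^ 2 := by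
    have h1 : ‖rotE α x - rotE β x‖ ^ 2 = ∑ i, (rotE α x - rotE β x) i ^ 2 := by
      rw [EuclideanSpace.norm_eq, Real.sq_sqrt (by positivity)]
      simp [sq_abs]
    have h2 : ‖x‖ ^ 2 = ∑ i, x i ^ 2 := by
      rw [EuclideanSpace.norm_eq, Real.sq_sqrt (by positivity)]
      simp [sq_abs]
    have e0 : (rotE α x - rotE β x) 0 =
        (Real.cos a - Real.cos b) * x 0 - (Real.sin a - Real.sin b) * x 1 := by
      show rotE α x 0 - rotE β x 0 = _
      simp only [rotE, WithLp.equiv_symm_apply, PiLp.toLp_apply, Matrix.cons_val_zero]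
      ring
    have e1 : (rotE α x - rotE β x) 1 =
        (Real.sin a - Real.sin b) * x 0 + (Real.cos a - Real.cos b) * x 1 := by
      show rotE α x 1 - rotE β x 1 = _
      simp only [rotE, WithLp.equiv_symm_apply, PiLp.toLp_apply, Matrix.cons_val_one,
        Matrix.head_cons, Matrix.cons_val_zero]
      ring
    rw [h1, h2, Fin.sum_univ_two, Fin.sum_univ_two, e0, e1, Real.cos_sub]
    nlinarith [Real.sin_sq_add_cos_sq a, Real.sin_sq_add_cos_sq b]
  have h2c : 2 - 2 * Real.cos (a - b) ≤ (a - b) ^ 2 := by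
    have hc := Real.cos_two_mul ((a - b) / 2)
    rw [show 2 * ((a - b) / 2) = a - b by ring] at hc
    have hsc := Real.sin_sq_add_cos_sq ((a - b) / 2)
    have hsq : Real.sin ((a - b) / 2) ^ 2 ≤ ((a - b) / 2) ^ 2 :=
      Real.sin_sq_le_sq
    nlinarith
  have hab : a - b = 2 * π * (α - β) := by rw [ha', hb']; ring
  have hn : ‖rotE α x - rotE β x‖ ^ 2 ≤ (2 * π * |α - β| * ‖x‖) ^ 2 := by
    rw [hkey]
    calc (2 - 2 * Real.cos (a - b)) * ‖x‖ ^ 2 ≤ (a - b) ^ 2 * ‖x‖ ^ 2 := by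
          nlinarith [sq_nonneg ‖x‖]
      _ = (2 * π * |α - β| * ‖x‖) ^ 2 := by
          rw [hab, show (2 * π * |α - β| * ‖x‖) ^ 2
              = (2 * π) ^ 2 * |α - β| ^ 2 * ‖x‖ ^ 2 by ring, sq_abs]
          ring
  have hbnd : 0 ≤ 2 * π * |α - β| * ‖x‖ := by positivity
  calc ‖rotE α x - rotE β x‖ = Real.sqrt (‖rotE α x - rotE β x‖ ^ 2) :=
        (Real.sqrt_sq (norm_nonneg _)).symm
    _ ≤ Real.sqrt ((2 * π * |α - β| * ‖x‖) ^ 2) := Real.sqrt_le_sqrt hn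
    _ = 2 * π * |α - β| * ‖x‖ := Real.sqrt_sq hbnd


/-- If two rigid motions `r = (α, p)` and `s = (β, q)` satisfy `|α - β| ≤ δ` and
`‖p - q‖ ≤ √2·δ` with `0 ≤ 2πδ ≤ π/2`, then their images of any point `x` with
`‖x‖ ≤ D` differ by at most `(√2 + 2πD)·δ`. -/
theorem stmt4 (α β : ℝ) (p q : EuclideanSpace ℝ (Fin 2)) (δ D : ℝ)
    (hD : 0 < D)
    (hαβ : |α - β| ≤ δ) (hpq : ‖p - q‖ ≤ Real.sqrt 2 * δ)
    (hδ0 : 0 ≤ 2 * π * δ) (hδ1 : 2 * π * δ ≤ π / 2)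
    (x : EuclideanSpace ℝ (Fin 2)) (hx : ‖x‖ ≤ D) :
    ‖(rotE α x + p) - (rotE β x + q)‖ ≤ (Real.sqrt 2 + 2 * π * D) * δ := by
  have hδ : 0 ≤ δ := (abs_nonneg _).trans hαβ
  have h1 : ‖rotE α x - rotE β x‖ ≤ 2 * π * D * δ := by
    have := rot_diff_le α β x
    have hπ := Real.pi_pos
    have hxnn := norm_nonneg x
    have hm : |α - β| * ‖x‖ ≤ δ * D := mul_le_mul hαβ hx hxnn hδ
    nlinarith
  have htri : ‖(rotE α x + p) - (rotE β x + q)‖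
      ≤ ‖rotE α x - rotE β x‖ + ‖p - q‖ := by
    have : (rotE α x + p) - (rotE β x + q)
        = (rotE α x - rotE β x) + (p - q) := by abel
    rw [this]; exact norm_add_le _ _
  calc ‖(rotE α x + p) - (rotE β x + q)‖ ≤ ‖rotE α x - rotE β x‖ + ‖p - q‖ := htri
    _ ≤ 2 * π * D * δ + Real.sqrt 2 * δ := add_le_add h1 hpq
    _ = (Real.sqrt 2 + 2 * π * D) * δ := by ring
end

section
/- Let P be a probability measure on ℝⁿ with density h that is Lipschitz continuous with constant L in the maximum norm. If r and s lie in a common δ-ball U_δ(t) (maximum norm), then |P(U_δ(r)) - P(U_δ(s))| < 4L·μ_δ·δ, where μ_δ = (2δ)ⁿ. -/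
open MeasureTheory

/-- If `P` has a density `h` on `ℝⁿ` that is Lipschitz with constant `L`
(maximum norm), and `r, s` lie in a common closed `δ`-ball around `t`, then
`|P(U_δ(r)) - P(U_δ(s))| < 4L·μ_δ·δ` where `μ_δ = (2δ)ⁿ`. -/
theorem stmt9 (n : ℕ) (h : (Fin n → ℝ) → ℝ) (L : ℝ) (hL : 0 < L)
    (hnonneg : ∀ x, 0 ≤ h x) (hint : Integrable h volume)
    (hone : ∫ x, h x = 1)
    (hLip : ∀ x y, |h x - h y| ≤ L * ‖x - y‖)
    (t r s : Fin n → ℝ) (δ : ℝ) (hδ : 0 < δ)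
    (hr : r ∈ Metric.closedBall t δ) (hs : s ∈ Metric.closedBall t δ) :
    |(∫ x in Metric.closedBall r δ, h x) - ∫ x in Metric.closedBall s δ, h x| <
      4 * L * (2 * δ) ^ n * δ := by
  set c : Fin n → ℝ := s - r with hc
  have hmp : MeasurePreserving (fun x : Fin n → ℝ => x + c) volume volume :=
    measurePreserving_add_right volume c
  have hemb : MeasurableEmbedding (fun x : Fin n → ℝ => x + c) :=
    (MeasurableEquiv.addRight c).measurableEmbedding
  have hpre : (fun x : Fin n → ℝ => x + c) ⁻¹' Metric.closedBall s δ =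
      Metric.closedBall r δ := by
    ext x
    simp only [Set.mem_preimage, Metric.mem_closedBall, dist_eq_norm, hc]
    constructor <;> intro hx <;> [skip; skip] <;>
      · convert hx using 2 <;> abel
  have htrans : (∫ x in Metric.closedBall s δ, h x) =
      ∫ x in Metric.closedBall r δ, h (x + c) := by
    rw [← hmp.setIntegral_preimage_emb hemb, hpre]
  have hintc : Integrable (fun x : Fin n → ℝ => h (x + c)) volume :=
    (hmp.integrable_comp hint.aestronglyMeasurable).2 hint
  rw [htrans, ← integral_sub hint.integrableOn hintc.integrableOn]
  have hcnorm : ‖c‖ ≤ 2 * δ := by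
    have : dist s r ≤ dist s t + dist t r := dist_triangle s t r
    rw [Metric.mem_closedBall] at hr hs
    have := this.trans (add_le_add hs (dist_comm t r ▸ hr))
    calc ‖c‖ = dist s r := by rw [hc, dist_eq_norm]
    _ ≤ 2 * δ := by linarith
  have hvol : volume (Metric.closedBall r δ) = ENNReal.ofReal ((2 * δ) ^ n) := by
    simpa [Fintype.card_fin] using Real.volume_pi_closedBall r hδ.le
  have hbound : |∫ x in Metric.closedBall r δ, (h x - h (x + c))| ≤
      (L * (2 * δ)) * (volume (Metric.closedBall r δ)).toReal := by
    rw [← Real.norm_eq_abs]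
    refine norm_setIntegral_le_of_norm_le_const ?_ ?_
    · rw [hvol]; exact ENNReal.ofReal_lt_top
    · intro x _
      rw [Real.norm_eq_abs]
      refine (hLip x (x + c)).trans ?_
      have : ‖x - (x + c)‖ = ‖c‖ := by rw [show x - (x + c) = -c by abel, norm_neg]
      rw [this]
      exact mul_le_mul_of_nonneg_left hcnorm hL.le
  have hvolR : (volume (Metric.closedBall r δ)).toReal = (2 * δ) ^ n := by
    rw [hvol, ENNReal.toReal_ofReal (by positivity)]
  rw [hvolR] at hbound
  calc |∫ x in Metric.closedBall r δ, (h x - h (x + c))| ≤ L * (2 * δ) * (2 * δ) ^ n :=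
        hbound
    _ < 4 * L * (2 * δ) ^ n * δ := by
        have hp : (0:ℝ) < L * δ * (2 * δ) ^ n := by positivity
        nlinarith
end
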